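/- Let $\mu$ be a probability measure on $\mathbb{R}$ supported in $[0,+\infty)$ with Stieltjes transform $g_\mu(z) = \int (z-t)^{-1} d\mu(t)$, and let $\sigma > 0$, $c \in (0,1]$. Then for every $z \in \mathbb{C}\setminus\mathbb{R}$, $|1 - \sigma^2 c\, g_\mu(z)| \geq |\Im z|/|z|$, i.e. $\frac{1}{|1-\sigma^2 c\, g_\mu(z)|} \leq \frac{|z|}{|\Im z|}$. -/

import Mathlib

open MeasureTheory

/-- If `μ` is a probability measure supported in `[0,∞)` with Stieltjes transform `g_μ`,
`σ > 0` and `c ∈ (0,1]`, then for nonreal `z`, `|1 - σ²c g_μ(z)| ≥ |Im z|/|z|`, i.e.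
`|1 - σ²c g_μ(z)|⁻¹ ≤ |z|/|Im z|`. -/
theorem one_sub_stieltjes_lower_bound (μ : Measure ℝ) [IsProbabilityMeasure μ]
    (hsupp : μ (Set.Iio 0) = 0) (σ c : ℝ) (hσ : 0 < σ) (hc0 : 0 < c) (hc1 : c ≤ 1)
    (z : ℂ) (hz : z.im ≠ 0) :
    |z.im| / ‖z‖ ≤
        ‖1 - ((σ ^ 2 * c : ℝ) : ℂ) * ∫ t, (z - (t : ℂ))⁻¹ ∂μ‖ ∧
      (‖1 - ((σ ^ 2 * c : ℝ) : ℂ) * ∫ t, (z - (t : ℂ))⁻¹ ∂μ‖)⁻¹ ≤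
        ‖z‖ / |z.im| := by
  set a : ℝ := σ ^ 2 * c with ha
  have ha0 : 0 < a := by positivity
  have hzne : ∀ t : ℝ, z - (t : ℂ) ≠ 0 := by
    intro t h
    apply hz
    have := congrArg Complex.im h
    simpa using this
  have hcont : Continuous fun t : ℝ => (z - (t : ℂ))⁻¹ := by
    exact (Continuous.sub continuous_const Complex.continuous_ofReal).inv₀ hzne
  have hf : Integrable (fun t : ℝ => (z - (t : ℂ))⁻¹) μ := by
    apply Integrable.mono' (integrable_const (|z.im|⁻¹)) hcont.aestronglyMeasurable
    filter_upwards with t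
    rw [norm_inv]
    apply inv_anti₀ (abs_pos.mpr hz)
    calc |z.im| = |(z - (t:ℂ)).im| := by simp
    _ ≤ ‖z - (t:ℂ)‖ := Complex.abs_im_le_norm _
  have hzf : Integrable (fun t : ℝ => z * (z - (t : ℂ))⁻¹) μ := hf.const_mul z
  set g : ℂ := ∫ t, (z - (t : ℂ))⁻¹ ∂μ with hg
  have hzg : z * g = ∫ t, z * (z - (t : ℂ))⁻¹ ∂μ := (integral_const_mul z _).symm
  have him : (z * g).im = ∫ t, (z * (z - (t : ℂ))⁻¹).im ∂μ := by
    rw [hzg]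
    exact (integral_im hzf).symm
  set I : ℝ := ∫ t, (z * (z - (t : ℂ))⁻¹).im ∂μ with hI
  -- pointwise formula
  have hpt : ∀ t : ℝ, 0 ≤ t → z.im * (z * (z - (t : ℂ))⁻¹).im ≤ 0 := by
    intro t ht
    have hns : 0 < Complex.normSq (z - t) := Complex.normSq_pos.mpr (hzne t)
    have : (z * (z - (t : ℂ))⁻¹).im = -z.im * t / Complex.normSq (z - t) := by
      rw [Complex.mul_im, Complex.inv_im, Complex.inv_re]
      simp only [Complex.sub_re, Complex.sub_im, Complex.ofReal_re, Complex.ofReal_im, sub_zero]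
      field_simp
      ring
    rw [this, mul_div_assoc']
    rw [div_nonpos_iff]
    right
    constructor
    · nlinarith [sq_nonneg z.im, ht]
    · exact hns.le
  have hae : ∀ᵐ t ∂μ, 0 ≤ t := by
    rw [ae_iff]
    convert hsupp using 2
    ext t
    simp [Set.mem_Iio, not_le]
  have hyI : z.im * I ≤ 0 := by
    rw [hI, ← integral_const_mul]
    apply integral_nonpos_of_ae
    filter_upwards [hae] with t ht using hpt t ht
  -- key : |z.im| ≤ |Im (z * (1 - a*g))|
  have hw : (z * (1 - (a : ℂ) * g)).im = z.im - a * I := by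
    have : z * (1 - (a:ℂ) * g) = z - (a:ℂ) * (z * g) := by ring
    rw [this]
    simp [Complex.sub_im, Complex.mul_im, him]
  have key : |z.im| ≤ ‖z * (1 - (a : ℂ) * g)‖ := by
    have h1 : |z.im| ≤ |(z * (1 - (a:ℂ) * g)).im| := by
      rw [hw]
      have hsq : z.im ^ 2 ≤ (z.im - a * I) ^ 2 := by nlinarith [sq_nonneg (a * I)]
      calc |z.im| = Real.sqrt (z.im ^ 2) := (Real.sqrt_sq_eq_abs _).symm
      _ ≤ Real.sqrt ((z.im - a * I) ^ 2) := Real.sqrt_le_sqrt hsq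
      _ = |z.im - a * I| := Real.sqrt_sq_eq_abs _
    exact h1.trans (Complex.abs_im_le_norm _)
  rw [norm_mul] at key
  have hzabs : 0 < ‖z‖ := by
    apply norm_pos_iff.mpr
    intro h; apply hz; rw [h]; simp
  have h1 : |z.im| / ‖z‖ ≤ ‖1 - (a : ℂ) * g‖ := by
    rw [div_le_iff₀ hzabs]
    linarith [key, mul_comm (‖z‖) (‖1 - (a:ℂ) * g‖)]
  refine ⟨h1, ?_⟩
  have habs0 : 0 < ‖1 - (a : ℂ) * g‖ :=
    lt_of_lt_of_le (by positivity) h1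
  have := inv_anti₀ (by positivity : (0:ℝ) < |z.im| / ‖z‖) h1
  rwa [inv_div] at this
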